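/- For all natural numbers m, l with l ≤ m, the sum ∑_{j=0}^{min(l, m-l)} 4^j * m! / ((m - j - l)! * (2j)! * (l - j)!) * 1/(2j + 1) equals (2m + 1)! / ((2l + 1)! * (2m - 2l + 1)!). -/

import Mathlib

open Finset Polynomial

private lemma aux1 (a n : ℕ) :
    ((1 + X ^ 2 : Polynomial ℕ) ^ a).coeff n = if 2 ∣ n then a.choose (n / 2) else 0 := by
  rw [add_comm, add_pow]
  simp only [one_pow, mul_one, ← pow_mul, Polynomial.finset_sum_coeff,
    Polynomial.coeff_mul_natCast, Polynomial.coeff_X_pow, Nat.cast_id, ite_mul, one_mul, zero_mul]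
  by_cases h : 2 ∣ n
  · obtain ⟨j, rfl⟩ := h
    rw [if_pos ⟨j, rfl⟩, Nat.mul_div_cancel_left _ (by norm_num)]
    have hc : ∀ k ∈ Finset.range (a + 1),
        (if 2 * j = 2 * k then a.choose k else 0) = if k = j then a.choose k else 0 := by
      intro k _
      exact if_congr (by omega) rfl rfl
    rw [Finset.sum_congr rfl hc, Finset.sum_ite_eq' (Finset.range (a + 1)) j]
    split_ifs with hja
    · rfl
    · exact (Nat.choose_eq_zero_of_lt (by simpa using hja)).symm
  · rw [if_neg h]
    apply Finset.sum_eq_zero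
    intro k _
    rw [if_neg]
    intro hnk
    exact h ⟨k, hnk⟩

private lemma aux2 (c a k n : ℕ) :
    (((2 * X : Polynomial ℕ)) ^ k * (1 + X ^ 2) ^ a * (c : Polynomial ℕ)).coeff n
      = c * 2 ^ k *
        (if k ≤ n ∧ 2 ∣ (n - k) then a.choose ((n - k) / 2) else 0) := by
  rw [mul_pow, mul_assoc, mul_assoc,
    show (2 : Polynomial ℕ) ^ k = ((2 ^ k : ℕ) : Polynomial ℕ) by push_cast; ring,
    Polynomial.coeff_natCast_mul, Polynomial.coeff_X_pow_mul']
  by_cases h1 : k ≤ n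
  · rw [if_pos h1, Polynomial.coeff_mul_natCast, aux1]
    by_cases h2 : 2 ∣ (n - k)
    · rw [if_pos h2, if_pos ⟨h1, h2⟩]; push_cast; ring
    · rw [if_neg h2, if_neg (by tauto)]; push_cast; ring
  · rw [if_neg h1, if_neg (by tauto)]; ring

private lemma sum_range_pair (f : ℕ → ℕ) (n : ℕ) :
    ∑ k ∈ Finset.range (2 * n + 2), f k = ∑ j ∈ Finset.range (n + 1), (f (2 * j) + f (2 * j + 1)) := by
  induction n with
  | zero => simp [Finset.sum_range_succ]
  | succ n ih =>
    rw [show 2 * (n + 1) + 2 = (2 * n + 2) + 1 + 1 by ring, Finset.sum_range_succ,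
      Finset.sum_range_succ, Finset.sum_range_succ _ (n + 1), ih,
      show (2 * n + 2) + 1 = 2 * (n + 1) + 1 by ring,
      show 2 * n + 2 = 2 * (n + 1) by ring]
    ring

private lemma keyNat (m l : ℕ) (hlm : l ≤ m) :
    ∑ j ∈ Finset.range (l + 1), (m + 1).choose (2 * j + 1) * 2 ^ (2 * j + 1) * (m - 2 * j).choose (l - j)
      = (2 * m + 2).choose (2 * l + 1) := by
  have hpoly : ((2 * X + (1 + X ^ 2) : Polynomial ℕ)) ^ (m + 1) = (1 + X) ^ (2 * m + 2) := by
    have hb : (2 * X + (1 + X ^ 2) : Polynomial ℕ) = (1 + X) ^ 2 := by ring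
    rw [hb, ← pow_mul, show 2 * (m + 1) = 2 * m + 2 by ring]
  have hco := congrArg (fun p => Polynomial.coeff p (2 * l + 1)) hpoly
  rw [Polynomial.coeff_one_add_X_pow, Nat.cast_id, add_pow, Polynomial.finset_sum_coeff] at hco
  simp only [aux2] at hco
  set f : ℕ → ℕ := fun k => (m + 1).choose k * 2 ^ k *
      (if k ≤ 2 * l + 1 ∧ 2 ∣ (2 * l + 1 - k) then (m + 1 - k).choose ((2 * l + 1 - k) / 2) else 0)
    with hf
  have hbig : ∀ N, m + 2 ≤ N → 2 * l + 2 ≤ N →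
      (∑ k ∈ Finset.range (m + 2), f k = ∑ k ∈ Finset.range N, f k)
      ∧ (∑ k ∈ Finset.range (2 * l + 2), f k = ∑ k ∈ Finset.range N, f k) := by
    intro N h1 h2
    constructor
    · apply Finset.sum_subset (Finset.range_subset_range.2 h1)
      intro k hk hk'
      simp only [Finset.mem_range] at hk hk'
      rw [hf]
      simp only
      rw [Nat.choose_eq_zero_of_lt (by omega), zero_mul, zero_mul]
    · apply Finset.sum_subset (Finset.range_subset_range.2 h2)
      intro k hk hk'
      simp only [Finset.mem_range] at hk hk'
      rw [hf]
      simp only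
      rw [if_neg (by omega), mul_zero]
  obtain ⟨hb1, hb2⟩ := hbig (m + 2 * l + 4) (by omega) (by omega)
  have hco2 : ∑ k ∈ Finset.range (2 * l + 2), f k = (2 * m + 2).choose (2 * l + 1) := by
    rw [hb2, ← hb1, ← hco]
  rw [← hco2, sum_range_pair]
  apply Finset.sum_congr rfl
  intro j hj
  simp only [Finset.mem_range] at hj
  have hjl : j ≤ l := by omega
  rw [hf]
  simp only
  rw [if_neg (by omega), mul_zero, zero_add,
    if_pos ⟨by omega, by omega⟩,
    show 2 * l + 1 - (2 * j + 1) = 2 * (l - j) by omega,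
    Nat.mul_div_cancel_left _ (by norm_num : 0 < 2),
    show m + 1 - (2 * j + 1) = m - 2 * j by omega]

private lemma termQ (m l j : ℕ) (hjl : j ≤ l) (hjm : j + l ≤ m) :
    ((4 : ℚ) ^ j * (m.factorial : ℚ) /
        (((m - j - l).factorial : ℚ) * ((2 * j).factorial : ℚ) * ((l - j).factorial : ℚ))
        * (1 / (2 * (j : ℚ) + 1)))
      = (((m + 1).choose (2 * j + 1) * 2 ^ (2 * j + 1) * (m - 2 * j).choose (l - j) : ℕ) : ℚ)
        / (2 * (m + 1)) := by
  have h1 : 2 * j + 1 ≤ m + 1 := by omega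
  have h2 : l - j ≤ m - 2 * j := by omega
  push_cast
  rw [Nat.cast_choose ℚ h1, Nat.cast_choose ℚ h2,
    show m + 1 - (2 * j + 1) = m - 2 * j by omega,
    show m - 2 * j - (l - j) = m - j - l by omega,
    Nat.factorial_succ m,
    show (2 * j + 1).factorial = (2 * j + 1) * (2 * j).factorial from Nat.factorial_succ _,
    show (2 : ℚ) ^ (2 * j + 1) = 2 * 4 ^ j by rw [pow_succ, pow_mul, mul_comm]; norm_num]
  have e1 : ((m - j - l).factorial : ℚ) ≠ 0 := Nat.cast_ne_zero.2 (Nat.factorial_ne_zero _)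
  have e2 : (((2 * j).factorial) : ℚ) ≠ 0 := Nat.cast_ne_zero.2 (Nat.factorial_ne_zero _)
  have e3 : ((l - j).factorial : ℚ) ≠ 0 := Nat.cast_ne_zero.2 (Nat.factorial_ne_zero _)
  have e4 : ((m - 2 * j).factorial : ℚ) ≠ 0 := Nat.cast_ne_zero.2 (Nat.factorial_ne_zero _)
  have e5 : (2 * (j : ℚ) + 1) ≠ 0 := by positivity
  have e6 : ((m : ℚ) + 1) ≠ 0 := by positivity
  push_cast
  field_simp

theorem trinomial_sum_identity (m l : ℕ) (hlm : l ≤ m) :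
    ∑ j ∈ Finset.range (min l (m - l) + 1),
      ((4 : ℚ) ^ j * (m.factorial : ℚ) /
        (((m - j - l).factorial : ℚ) * ((2 * j).factorial : ℚ) * ((l - j).factorial : ℚ))
        * (1 / (2 * (j : ℚ) + 1)))
      = ((2 * m + 1).factorial : ℚ) /
        (((2 * l + 1).factorial : ℚ) * ((2 * m - 2 * l + 1).factorial : ℚ)) := by
  have hrange : ∑ j ∈ Finset.range (min l (m - l) + 1),
      ((m + 1).choose (2 * j + 1) * 2 ^ (2 * j + 1) * (m - 2 * j).choose (l - j))
      = ∑ j ∈ Finset.range (l + 1),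
      ((m + 1).choose (2 * j + 1) * 2 ^ (2 * j + 1) * (m - 2 * j).choose (l - j)) := by
    apply Finset.sum_subset (Finset.range_subset_range.2 (by omega))
    intro k hk hk'
    simp only [Finset.mem_range] at hk hk'
    rcases (show m + 1 < 2 * k + 1 ∨ m - 2 * k < l - k by omega) with h | h
    · rw [Nat.choose_eq_zero_of_lt h, zero_mul, zero_mul]
    · rw [Nat.choose_eq_zero_of_lt h, mul_zero]
  calc
    ∑ j ∈ Finset.range (min l (m - l) + 1),
      ((4 : ℚ) ^ j * (m.factorial : ℚ) /
        (((m - j - l).factorial : ℚ) * ((2 * j).factorial : ℚ) * ((l - j).factorial : ℚ))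
        * (1 / (2 * (j : ℚ) + 1)))
      = ∑ j ∈ Finset.range (min l (m - l) + 1),
        ((((m + 1).choose (2 * j + 1) * 2 ^ (2 * j + 1) * (m - 2 * j).choose (l - j) : ℕ) : ℚ)
          / (2 * (m + 1))) := by
        apply Finset.sum_congr rfl
        intro j hj
        simp only [Finset.mem_range] at hj
        exact termQ m l j (by omega) (by omega)
    _ = ((∑ j ∈ Finset.range (min l (m - l) + 1),
          ((m + 1).choose (2 * j + 1) * 2 ^ (2 * j + 1) * (m - 2 * j).choose (l - j)) : ℕ) : ℚ)
          / (2 * (m + 1)) := by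
        rw [← Finset.sum_div, Nat.cast_sum]
    _ = (((2 * m + 2).choose (2 * l + 1) : ℕ) : ℚ) / (2 * (m + 1)) := by
        rw [hrange, keyNat m l hlm]
    _ = ((2 * m + 1).factorial : ℚ) /
        (((2 * l + 1).factorial : ℚ) * ((2 * m - 2 * l + 1).factorial : ℚ)) := by
        rw [Nat.cast_choose ℚ (show 2 * l + 1 ≤ 2 * m + 2 by omega),
          show 2 * m + 2 - (2 * l + 1) = 2 * m - 2 * l + 1 by omega,
          show (2 * m + 2).factorial = (2 * m + 2) * (2 * m + 1).factorial from Nat.factorial_succ _]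
        have e1 : ((2 * l + 1).factorial : ℚ) ≠ 0 := Nat.cast_ne_zero.2 (Nat.factorial_ne_zero _)
        have e2 : ((2 * m - 2 * l + 1).factorial : ℚ) ≠ 0 := Nat.cast_ne_zero.2 (Nat.factorial_ne_zero _)
        have e3 : ((m : ℚ) + 1) ≠ 0 := by positivity
        push_cast
        field_simp
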